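/- If g is a perfect Lie algebra with zero center, then every derivation of Der(g) is inner. -/

import Mathlib

/-- If `g` is perfect with zero center, then every derivation of `Der(g)` is inner. -/
theorem derivation_of_derivation_isInner (K : Type*) (L : Type*) [Field K] [LieRing L]
    [LieAlgebra K L] (hperf : ⁅(⊤ : LieIdeal K L), (⊤ : LieIdeal K L)⁆ = ⊤)
    (hc : LieAlgebra.center K L = ⊥)
    (D : LieDerivation K (LieDerivation K L L) (LieDerivation K L L)) :
    ∃ d : LieDerivation K L L, D = LieDerivation.ad K (LieDerivation K L L) d := by
  classical
  set A := LieDerivation.ad K L with hA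
  have hinj : Function.Injective A := LieDerivation.injective_ad_of_center_eq_bot hc
  have hinj' : Function.Injective (A : L →ₗ⁅K⁆ LieDerivation K L L).toLinearMap := by
    simpa using hinj
  -- ⁅A x, d⁆ = - A (d x)
  have hswap : ∀ (x : L) (d : LieDerivation K L L), ⁅A x, d⁆ = - A (d x) := by
    intro x d
    rw [← lie_skew, LieDerivation.lie_der_ad_eq_ad_der]
  -- Step 1: D maps range of ad into range of ad.
  have key : ∀ z : L, D.toLinearMap (A z) ∈
      LinearMap.range (A : L →ₗ⁅K⁆ LieDerivation K L L).toLinearMap := by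
    intro z
    have hz0 : z ∈ ⁅(⊤ : LieIdeal K L), (⊤ : LieIdeal K L)⁆ := by
      rw [hperf]; trivial
    have hz : z ∈ Submodule.span K { m | ∃ x ∈ (⊤ : LieIdeal K L),
        ∃ n ∈ (⊤ : LieIdeal K L), ⁅x, n⁆ = m } := by
      rw [← LieSubmodule.lieIdeal_oper_eq_linear_span']
      exact hz0
    set P : Submodule K L := Submodule.comap
      (D.toLinearMap ∘ₗ (A : L →ₗ⁅K⁆ LieDerivation K L L).toLinearMap)
      (LinearMap.range (A : L →ₗ⁅K⁆ LieDerivation K L L).toLinearMap) with hP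
    have hle : Submodule.span K { m | ∃ x ∈ (⊤ : LieIdeal K L),
        ∃ n ∈ (⊤ : LieIdeal K L), ⁅x, n⁆ = m } ≤ P := by
      rw [Submodule.span_le]
      rintro m ⟨x, -, y, -, rfl⟩
      have h1 : A ⁅x, y⁆ = ⁅A x, A y⁆ := A.map_lie x y
      have h2 : (D ⁅A x, A y⁆ : LieDerivation K L L)
          = ⁅A x, D (A y)⁆ - ⁅A y, D (A x)⁆ := D.apply_lie_eq_sub (A x) (A y)
      show ⁅x, y⁆ ∈ P
      rw [hP, Submodule.mem_comap]
      refine ⟨(D (A x)) y - (D (A y)) x, ?_⟩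
      show A ((D (A x)) y - (D (A y)) x) = D (A ⁅x, y⁆)
      rw [map_sub A, h1, h2, hswap x (D (A y)), hswap y (D (A x))]
      abel
    have := hle hz
    simpa [hP] using this
  -- Step 2: define the candidate derivation E.
  let Feq : L ≃ₗ[K] LinearMap.range (A : L →ₗ⁅K⁆ LieDerivation K L L).toLinearMap :=
    LinearEquiv.ofInjective _ hinj'
  let E0 : L →ₗ[K] L := Feq.symm.toLinearMap ∘ₗ
    LinearMap.codRestrict _ (D.toLinearMap ∘ₗ (A : L →ₗ⁅K⁆ LieDerivation K L L).toLinearMap)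
      (fun z => by simpa using key z)
  have hAE : ∀ z : L, A (E0 z) = D (A z) := by
    intro z
    have h1 : Feq (E0 z) = LinearMap.codRestrict _
        (D.toLinearMap ∘ₗ (A : L →ₗ⁅K⁆ LieDerivation K L L).toLinearMap)
        (fun z => by simpa using key z) z := by
      simp [E0]
    have h2 := congrArg (Subtype.val) h1
    simpa [Feq, LinearEquiv.ofInjective_apply] using h2
  have hleib : ∀ a b : L, E0 ⁅a, b⁆ = ⁅a, E0 b⁆ - ⁅b, E0 a⁆ := by
    intro a b
    apply hinj
    rw [hAE, A.map_lie]
    have h2 : (D ⁅A a, A b⁆ : LieDerivation K L L)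
        = ⁅A a, D (A b)⁆ - ⁅A b, D (A a)⁆ := D.apply_lie_eq_sub (A a) (A b)
    rw [h2, ← hAE a, ← hAE b, ← A.map_lie a (E0 b), ← A.map_lie b (E0 a), ← map_sub A]
  let E : LieDerivation K L L := ⟨E0, hleib⟩
  have hAE' : ∀ z : L, A (E z) = D (A z) := hAE
  refine ⟨E, ?_⟩
  ext d x
  have hd : (D d : LieDerivation K L L) x = ⁅E, d⁆ x := by
    apply hinj
    have h1 : (D ⁅d, A x⁆ : LieDerivation K L L)
        = ⁅d, D (A x)⁆ - ⁅A x, D d⁆ := D.apply_lie_eq_sub d (A x)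
    have h2 : ⁅d, A x⁆ = A (d x) := LieDerivation.lie_der_ad_eq_ad_der d x
    have h3 : ⁅A x, (D d : LieDerivation K L L)⁆ = - A ((D d) x) := hswap x (D d)
    have h4 : (⁅d, D (A x)⁆ : LieDerivation K L L) = A (d (E x)) := by
      rw [← hAE' x, LieDerivation.lie_der_ad_eq_ad_der]
    have h5 : (D (A (d x)) : LieDerivation K L L) = A (E (d x)) := (hAE' (d x)).symm
    have : A (E (d x)) = A (d (E x)) + A ((D d) x) := by
      rw [← h5, ← h2, h1, h3, h4]; abel
    have h6 : A ((D d) x) = A (E (d x) - d (E x)) := by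
      rw [map_sub A, this]; abel
    rw [LieDerivation.commutator_apply]
    exact h6
  rw [hd]
  simp
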